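/- Let R be a finite commutative chain ring, S a Galois extension of R of degree m with residue field F_{q^m} and natural projection Ψ : S → F_{q^m} extended coefficient-by-coefficient to S^n. Let C be a linear code of length n over S with Ψ(C) ≠ {0}. Then (i) d(C) ≤ d(Ψ(C)); and (ii) if C is a free S-module, then d(C) = d(Ψ(C)). -/

import Mathlib

open IsLocalRing

/-- The rank of a submodule `N`: the smallest number of elements generating `N`. -/
noncomputable def subrank {R M : Type*} [Semiring R] [AddCommMonoid M] [Module R M]
    (N : Submodule R M) : ℕ :=
  sInf {k | ∃ f : Fin k → M, Submodule.span R (Set.range f) = N}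

/-- The rank of a vector `u ∈ S^n` over `R`: the smallest number of generators of the
`R`-submodule of `S` generated by the coordinates of `u` (i.e. of the support of `u`). -/
noncomputable def vecrank (R : Type*) {S : Type*} {n : ℕ} [Semiring R] [AddCommMonoid S]
    [Module R S] (u : Fin n → S) : ℕ :=
  subrank (Submodule.span R (Set.range u))

/-- The minimum rank distance of a linear code `C ⊆ S^n`, ranks being taken over `K`. -/
noncomputable def minrkdist (K : Type*) {S : Type*} {n : ℕ} [Semiring K] [Ring S]
    [Module K S] (C : Submodule S (Fin n → S)) : ℕ :=
  sInf {d | ∃ u ∈ C, ∃ v ∈ C, u ≠ v ∧ vecrank K (u - v) = d}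

lemma vecrank_map_le {R₁ R₂ M₁ M₂ : Type*} [Semiring R₁] [Semiring R₂]
    [AddCommMonoid M₁] [AddCommMonoid M₂] [Module R₁ M₁] [Module R₂ M₂]
    {σ : R₁ →+* R₂} [RingHomSurjective σ] (F : M₁ →ₛₗ[σ] M₂)
    {n : ℕ} (u : Fin n → M₁) :
    vecrank R₂ (fun i => F (u i)) ≤ vecrank R₁ u := by
  have hne : {k | ∃ f : Fin k → M₁,
      Submodule.span R₁ (Set.range f) = Submodule.span R₁ (Set.range u)}.Nonempty := ⟨n, u, rfl⟩
  obtain ⟨f, hf⟩ : ∃ f : Fin (vecrank R₁ u) → M₁,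
      Submodule.span R₁ (Set.range f) = Submodule.span R₁ (Set.range u) := Nat.sInf_mem hne
  apply Nat.sInf_le
  refine ⟨fun i => F (f i), ?_⟩
  calc Submodule.span R₂ (Set.range fun i => F (f i))
      = Submodule.map F (Submodule.span R₁ (Set.range f)) := by
        rw [Submodule.map_span]; congr 1; exact Set.range_comp F f
    _ = Submodule.map F (Submodule.span R₁ (Set.range u)) := by rw [hf]
    _ = Submodule.span R₂ (Set.range fun i => F (u i)) := by
        rw [Submodule.map_span]; congr 1; exact (Set.range_comp F u).symm

theorem key_vecrank {R S : Type*} [CommRing R] [IsLocalRing R] [CommRing S] [IsLocalRing S]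
    [Algebra R S] [IsLocalHom (algebraMap R S)]
    (π : S) (hπ0 : π ≠ 0) (hπm : ∀ s ∈ maximalIdeal S, π * s = 0)
    {n : ℕ} (u : Fin n → S) :
    letI : Module (ResidueField R) (ResidueField S) :=
      (ResidueField.map (algebraMap R S)).toAlgebra.toModule
    vecrank R (fun i => π * u i) = vecrank (ResidueField R) (fun i => residue S (u i)) := by
  letI : Algebra (ResidueField R) (ResidueField S) := (ResidueField.map (algebraMap R S)).toAlgebra
  letI : Module (ResidueField R) (ResidueField S) :=
    (ResidueField.map (algebraMap R S)).toAlgebra.toModule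
  classical
  have hπ3 : ∀ s : S, π * s = 0 → s ∈ maximalIdeal S := by
    intro s hs
    by_contra hmem
    obtain ⟨b, hb⟩ := (IsLocalRing.notMem_maximalIdeal.mp hmem).exists_left_inv
    apply hπ0
    calc π = π * (s * b) := by rw [mul_comm s b, hb, mul_one]
      _ = (π * s) * b := (mul_assoc _ _ _).symm
      _ = 0 := by rw [hs, zero_mul]
  have hressmul : ∀ (r : R) (s : S), residue S (r • s) = residue R r • residue S s := by
    intro r s
    rw [Algebra.smul_def (A := ResidueField S), RingHom.algebraMap_toAlgebra,
      ResidueField.map_residue, Algebra.smul_def, map_mul]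
  have hressum : ∀ {m : ℕ} (r : Fin m → R) (v : Fin m → S),
      residue S (∑ i, r i • v i) = ∑ i, residue R (r i) • residue S (v i) := by
    intro m r v
    rw [map_sum]
    exact Finset.sum_congr rfl fun i _ => hressmul _ _
  have hmulsum : ∀ {m : ℕ} (r : Fin m → R) (v : Fin m → S),
      π * (∑ i, r i • v i) = ∑ i, r i • (π * v i) := by
    intro m r v
    rw [Finset.mul_sum]
    exact Finset.sum_congr rfl fun i _ => mul_smul_comm _ _ _
  obtain ⟨lft, hlft⟩ : ∃ l : ResidueField R → R, ∀ a, residue R (l a) = a :=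
    ⟨Function.surjInv residue_surjective, Function.surjInv_eq residue_surjective⟩
  -- transfer lemmas
  have T1 : ∀ a b : S, π * a = π * b → residue S a = residue S b := by
    intro a b h
    have hm : a - b ∈ maximalIdeal S := hπ3 _ (by rw [mul_sub, h, sub_self])
    have h0 : residue S (a - b) = 0 := Ideal.Quotient.eq_zero_iff_mem.mpr hm
    rw [map_sub] at h0
    exact sub_eq_zero.mp h0
  have T2 : ∀ a b : S, residue S a = residue S b → π * a = π * b := by
    intro a b h
    have hm : a - b ∈ maximalIdeal S := by
      rw [← Ideal.Quotient.eq_zero_iff_mem]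
      show residue S (a - b) = 0
      rw [map_sub, h, sub_self]
    have := hπm _ hm
    rw [mul_sub] at this
    exact sub_eq_zero.mp this
  -- one-sided span transfer
  have step1 : ∀ {a b : ℕ} (A : Fin a → S) (B : Fin b → S),
      Submodule.span R (Set.range fun j => π * A j) ≤
        Submodule.span R (Set.range fun j => π * B j) →
      Submodule.span (ResidueField R) (Set.range fun j => residue S (A j)) ≤
        Submodule.span (ResidueField R) (Set.range fun j => residue S (B j)) := by
    intro a b A B hAB
    rw [Submodule.span_le]
    rintro - ⟨j, rfl⟩
    show residue S (A j) ∈ (Submodule.span (ResidueField R) (Set.range fun j => residue S (B j)) : Set (ResidueField S))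
    have h1 : π * A j ∈ Submodule.span R (Set.range fun j => π * B j) :=
      hAB (Submodule.subset_span (Set.mem_range_self j))
    obtain ⟨r, hr⟩ := (Submodule.mem_span_range_iff_exists_fun R).mp h1
    have h2 : residue S (A j) = ∑ i, residue R (r i) • residue S (B i) := by
      rw [← hressum]
      exact (T1 _ _ (by rw [hmulsum, hr])).symm
    rw [h2]
    exact Submodule.sum_mem _ fun i _ =>
      Submodule.smul_mem _ _ (Submodule.subset_span (Set.mem_range_self i))
  have step2 : ∀ {a b : ℕ} (A : Fin a → S) (B : Fin b → S),
      Submodule.span (ResidueField R) (Set.range fun j => residue S (A j)) ≤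
        Submodule.span (ResidueField R) (Set.range fun j => residue S (B j)) →
      Submodule.span R (Set.range fun j => π * A j) ≤
        Submodule.span R (Set.range fun j => π * B j) := by
    intro a b A B hAB
    rw [Submodule.span_le]
    rintro - ⟨j, rfl⟩
    show π * A j ∈ (Submodule.span R (Set.range fun j => π * B j) : Set S)
    have h1 : residue S (A j) ∈
        Submodule.span (ResidueField R) (Set.range fun j => residue S (B j)) :=
      hAB (Submodule.subset_span (Set.mem_range_self j))
    obtain ⟨c, hc⟩ := (Submodule.mem_span_range_iff_exists_fun (ResidueField R)).mp h1
    have h2 : residue S (∑ i, lft (c i) • B i) = residue S (A j) := by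
      rw [hressum]
      simp only [hlft]
      exact hc
    have h3 : π * A j = ∑ i, lft (c i) • (π * B i) := by
      rw [← hmulsum]
      exact (T2 _ _ h2).symm
    rw [h3]
    exact Submodule.sum_mem _ fun i _ =>
      Submodule.smul_mem _ _ (Submodule.subset_span (Set.mem_range_self i))
  -- the main correspondence
  have main : ∀ {m : ℕ} (H : Fin m → S),
      Submodule.span R (Set.range fun j => π * H j) =
        Submodule.span R (Set.range fun i => π * u i) ↔
      Submodule.span (ResidueField R) (Set.range fun j => residue S (H j)) =
        Submodule.span (ResidueField R) (Set.range fun i => residue S (u i)) := by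
    intro m H
    constructor
    · intro h
      exact le_antisymm (step1 H u h.le) (step1 u H h.ge)
    · intro h
      exact le_antisymm (step2 H u h.le) (step2 u H h.ge)
  apply le_antisymm
  · -- subrank N ≤ subrank Nb
    have hne : {t | ∃ f : Fin t → ResidueField S, Submodule.span (ResidueField R) (Set.range f) =
        Submodule.span (ResidueField R) (Set.range fun i => residue S (u i))}.Nonempty :=
      ⟨n, fun i => residue S (u i), rfl⟩
    obtain ⟨hb, hhb⟩ : ∃ f : Fin (vecrank (ResidueField R) fun i => residue S (u i)) →
        ResidueField S, Submodule.span (ResidueField R) (Set.range f) =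
        Submodule.span (ResidueField R) (Set.range fun i => residue S (u i)) :=
      Nat.sInf_mem hne
    choose c hc using fun j => (Submodule.mem_span_range_iff_exists_fun (ResidueField R)).mp
      (show hb j ∈ Submodule.span (ResidueField R) (Set.range fun i => residue S (u i)) from
        hhb ▸ Submodule.subset_span (Set.mem_range_self j))
    set H : Fin (vecrank (ResidueField R) fun i => residue S (u i)) → S :=
      fun j => ∑ i, lft (c j i) • u i with hH
    have hresH : ∀ j, residue S (H j) = hb j := by
      intro j
      rw [hH, hressum]
      simp only [hlft]
      exact hc j
    have hspan : Submodule.span (ResidueField R) (Set.range fun j => residue S (H j)) =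
        Submodule.span (ResidueField R) (Set.range fun i => residue S (u i)) := by
      rw [show (fun j => residue S (H j)) = hb from funext hresH, hhb]
    exact Nat.sInf_le ⟨fun j => π * H j, (main H).mpr hspan⟩
  · -- subrank Nb ≤ subrank N
    have hne : {t | ∃ f : Fin t → S, Submodule.span R (Set.range f) =
        Submodule.span R (Set.range fun i => π * u i)}.Nonempty :=
      ⟨n, fun i => π * u i, rfl⟩
    obtain ⟨g, hg⟩ : ∃ f : Fin (vecrank R fun i => π * u i) → S,
        Submodule.span R (Set.range f) = Submodule.span R (Set.range fun i => π * u i) :=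
      Nat.sInf_mem hne
    choose r hr using fun j => (Submodule.mem_span_range_iff_exists_fun R).mp
      (show g j ∈ Submodule.span R (Set.range fun i => π * u i) from
        hg ▸ Submodule.subset_span (Set.mem_range_self j))
    set H : Fin (vecrank R fun i => π * u i) → S := fun j => ∑ i, r j i • u i with hH
    have hgH : (fun j => π * H j) = g := by
      funext j
      rw [hH, hmulsum]
      exact hr j
    have hspan : Submodule.span R (Set.range fun j => π * H j) =
        Submodule.span R (Set.range fun i => π * u i) := by rw [hgH, hg]
    exact Nat.sInf_le ⟨fun j => residue S (H j), (main H).mp hspan⟩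



/-- Let `R` be a finite commutative chain ring, `S` a Galois extension of
`R` of degree `m` with residue field `F_{q^m}` and natural projection `Ψ : S → F_{q^m}`
extended coefficient-by-coefficient to `S^n`.  Let `C` be a linear code of length `n` over
`S` with `Ψ(C) ≠ {0}`.  Then (i) `d(C) ≤ d(Ψ(C))`, and (ii) if `C` is a free `S`-module
then `d(C) = d(Ψ(C))`. -/
theorem minDist_le_minDist_residue_and_eq_of_free
    (R S : Type*) [CommRing R] [Finite R] [IsLocalRing R] [IsPrincipalIdealRing R]
    [CommRing S] [Finite S] [IsLocalRing S] [IsPrincipalIdealRing S]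
    [Algebra R S] [IsLocalHom (algebraMap R S)] [Module.Free R S]
    (m : ℕ) (hm : Module.finrank R S = m)
    (hGal : maximalIdeal S = Ideal.map (algebraMap R S) (maximalIdeal R))
    (n : ℕ) (C : Submodule S (Fin n → S))
    (Cres : Submodule (ResidueField S) (Fin n → ResidueField S))
    (hCres : Cres = Submodule.span (ResidueField S)
      ((fun (v : Fin n → S) (i : Fin n) => residue S (v i)) '' (C : Set (Fin n → S))))
    (hne : Cres ≠ ⊥) :
    letI : Module (ResidueField R) (ResidueField S) :=
      (ResidueField.map (algebraMap R S)).toAlgebra.toModule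
    (minrkdist R C ≤ minrkdist (ResidueField R) Cres ∧
      (Module.Free S ↥C → minrkdist R C = minrkdist (ResidueField R) Cres)) := by
  classical
  letI : Module (ResidueField R) (ResidueField S) :=
    (ResidueField.map (algebraMap R S)).toAlgebra.toModule
  haveI : RingHomSurjective (residue S) := ⟨residue_surjective⟩
  -- θ and nilpotency exponent
  obtain ⟨θ, hθ⟩ := (IsPrincipalIdealRing.principal (maximalIdeal S)).principal
  have hθm : θ ∈ maximalIdeal S := hθ ▸ Submodule.mem_span_singleton_self θ
  have hnil : IsNilpotent θ := by
    haveI : IsArtinianRing S := isArtinian_of_finite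
    obtain ⟨N, hN⟩ := IsArtinianRing.isNilpotent_jacobson_bot (R := S)
    rw [IsLocalRing.jacobson_eq_maximalIdeal ⊥ bot_ne_top] at hN
    refine ⟨N, ?_⟩
    have h1 := Ideal.pow_mem_pow hθm N
    rw [hN] at h1
    exact (Ideal.mem_bot).mp h1
  have hE : {t | θ ^ t = 0}.Nonempty := hnil
  have he : θ ^ sInf {t | θ ^ t = 0} = 0 := Nat.sInf_mem hE
  set e := sInf {t | θ ^ t = 0} with he_def
  have he0 : e ≠ 0 := by
    intro h
    rw [h, pow_zero] at he
    exact one_ne_zero he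
  set π := θ ^ (e - 1) with hπ_def
  have hπ0 : π ≠ 0 := by
    have := Nat.notMem_of_lt_sInf (show e - 1 < sInf {t | θ ^ t = 0} by
      rw [← he_def]; omega)
    simpa using this
  have hπθ : π * θ = 0 := by
    rw [hπ_def, ← pow_succ]
    have h1 : e - 1 + 1 = e := by omega
    rw [h1, he]
  have hπm : ∀ s ∈ maximalIdeal S, π * s = 0 := by
    intro s hs
    rw [hθ, Submodule.mem_span_singleton] at hs
    obtain ⟨a, rfl⟩ := hs
    rw [smul_eq_mul, mul_comm a θ, ← mul_assoc, hπθ, zero_mul]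
  have hπ3 : ∀ s : S, π * s = 0 → s ∈ maximalIdeal S := by
    intro s hs
    by_contra hmem
    obtain ⟨b, hb⟩ := (IsLocalRing.notMem_maximalIdeal.mp hmem).exists_left_inv
    apply hπ0
    calc π = π * (s * b) := by rw [mul_comm s b, hb, mul_one]
      _ = (π * s) * b := (mul_assoc _ _ _).symm
      _ = 0 := by rw [hs, zero_mul]
  -- the coordinatewise residue map
  let Ψn : (Fin n → S) →ₛₗ[residue S] (Fin n → ResidueField S) :=
    { toFun := fun v i => residue S (v i)
      map_add' := fun v w => by funext i; exact map_add _ _ _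
      map_smul' := fun s v => by funext i; exact map_mul _ _ _ }
  have hCmap : Cres = Submodule.map Ψn C := by
    rw [hCres]
    have h1 : ((fun (v : Fin n → S) (i : Fin n) => residue S (v i)) ''
        (C : Set (Fin n → S))) = ((Submodule.map Ψn C : Submodule (ResidueField S)
        (Fin n → ResidueField S)) : Set (Fin n → ResidueField S)) := rfl
    rw [h1, Submodule.span_eq]
  -- a minimizing pair in Cres
  obtain ⟨w0, hw0C, hw00⟩ := Submodule.ne_bot_iff Cres |>.mp hne
  have hDres_ne : {d | ∃ a ∈ Cres, ∃ b ∈ Cres, a ≠ b ∧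
      vecrank (ResidueField R) (a - b) = d}.Nonempty :=
    ⟨_, w0, hw0C, 0, Cres.zero_mem, hw00, rfl⟩
  obtain ⟨w1, hw1, w2, hw2, hw12, hwv⟩ :
      ∃ a ∈ Cres, ∃ b ∈ Cres, a ≠ b ∧
        vecrank (ResidueField R) (a - b) = minrkdist (ResidueField R) Cres :=
    Nat.sInf_mem hDres_ne
  have hwC : w1 - w2 ∈ Cres := sub_mem hw1 hw2
  rw [hCmap] at hwC
  obtain ⟨u, huC, hu⟩ := hwC
  have hw_ne : w1 - w2 ≠ 0 := sub_ne_zero.mpr hw12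
  obtain ⟨i0, hi0⟩ : ∃ i, (w1 - w2) i ≠ 0 := by
    by_contra h
    push_neg at h
    exact hw_ne (funext h)
  have hui0 : residue S (u i0) ≠ 0 := by
    have : residue S (u i0) = (w1 - w2) i0 := congrFun hu i0
    rw [this]; exact hi0
  have hui0m : u i0 ∉ maximalIdeal S := fun h => hui0 (Ideal.Quotient.eq_zero_iff_mem.mpr h)
  have hu'C : (fun i => π * u i) ∈ C := by
    have h1 := C.smul_mem π huC
    have h2 : π • u = fun i => π * u i := rfl
    rwa [h2] at h1
  have hu'0 : (fun i => π * u i) ≠ (0 : Fin n → S) := by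
    intro h
    exact hui0m (hπ3 _ (congrFun h i0))
  have keyu := key_vecrank (R := R) π hπ0 hπm u
  have part1 : minrkdist R C ≤ minrkdist (ResidueField R) Cres := by
    have h1 : minrkdist R C ≤ vecrank R ((fun i => π * u i) - 0) :=
      Nat.sInf_le ⟨_, hu'C, 0, C.zero_mem, hu'0, rfl⟩
    rw [sub_zero] at h1
    have h2 : (fun i => residue S (u i)) = w1 - w2 := hu
    calc minrkdist R C ≤ vecrank R (fun i => π * u i) := h1
      _ = vecrank (ResidueField R) (fun i => residue S (u i)) := keyu
      _ = vecrank (ResidueField R) (w1 - w2) := by rw [h2]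
      _ = minrkdist (ResidueField R) Cres := hwv
  refine ⟨part1, fun hfree => le_antisymm part1 ?_⟩
  -- (ii): the reverse inequality for free C
  have hD_ne : {d | ∃ a ∈ C, ∃ b ∈ C, a ≠ b ∧ vecrank R (a - b) = d}.Nonempty :=
    ⟨_, _, hu'C, 0, C.zero_mem, hu'0, rfl⟩
  obtain ⟨v1, hv1, v2, hv2, hv12, hvv⟩ :
      ∃ a ∈ C, ∃ b ∈ C, a ≠ b ∧ vecrank R (a - b) = minrkdist R C :=
    Nat.sInf_mem hD_ne
  set x := v1 - v2 with hx_def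
  have hxC : x ∈ C := sub_mem hv1 hv2
  have hx0 : x ≠ 0 := sub_ne_zero.mpr hv12
  -- extract the largest power of θ dividing x
  have hA_ne : {t | θ ^ t • x = (0 : Fin n → S)}.Nonempty := ⟨e, show θ ^ e • x = (0 : Fin n → S) by rw [he, zero_smul]⟩
  have hj1mem : θ ^ sInf {t | θ ^ t • x = (0 : Fin n → S)} • x = 0 := Nat.sInf_mem hA_ne
  set j1 := sInf {t | θ ^ t • x = (0 : Fin n → S)} with hj1_def
  have hj10 : j1 ≠ 0 := by
    intro h
    rw [h, pow_zero, one_smul] at hj1mem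
    exact hx0 hj1mem
  set j := j1 - 1 with hj_def
  have hjx : θ ^ j • x ≠ 0 := by
    have := Nat.notMem_of_lt_sInf (show j < sInf {t | θ ^ t • x = (0 : Fin n → S)} by
      rw [← hj1_def]; omega)
    simpa using this
  have hjx1 : θ ^ (j + 1) • x = 0 := by
    have h1 : j + 1 = j1 := by omega
    rw [h1]
    exact hj1mem
  have hx'C : θ ^ j • x ∈ C := C.smul_mem _ hxC
  -- basis of the free module C
  let b := Module.Free.chooseBasis S ↥C
  set xe : ↥C := ⟨θ ^ j • x, hx'C⟩ with hxe_def
  set c := b.repr xe with hc_def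
  have hθxe : θ • xe = 0 := by
    apply Subtype.ext
    show θ • (θ ^ j • x) = (0 : Fin n → S)
    rw [smul_smul, ← pow_succ']
    exact hjx1
  have hann : ∀ i, θ * c i = 0 := by
    intro i
    have h0 : b.repr (θ • xe) = 0 := by rw [hθxe, map_zero]
    rw [map_smul] at h0
    have h1 := DFunLike.congr_fun h0 i
    simpa [hc_def] using h1
  -- factorization of the annihilator of θ
  have hfac : ∀ s : S, θ * s = 0 → ∃ t : S, s = π * t := by
    intro s hs
    rcases eq_or_ne s 0 with rfl | hs0
    · exact ⟨0, by rw [mul_zero]⟩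
    have hB_ne : {t | s ∉ Ideal.span {θ ^ t}}.Nonempty := by
      refine ⟨e, ?_⟩
      show s ∉ Ideal.span {θ ^ e}
      rw [he, Ideal.span_singleton_eq_bot.mpr rfl]
      simpa using hs0
    have hk1 : s ∉ Ideal.span {θ ^ sInf {t | s ∉ Ideal.span {θ ^ t}}} := Nat.sInf_mem hB_ne
    set k1 := sInf {t | s ∉ Ideal.span {θ ^ t}} with hk1_def
    have hk10 : k1 ≠ 0 := by
      intro h
      apply hk1
      rw [h, pow_zero, Ideal.span_singleton_one]
      exact Submodule.mem_top
    set k := k1 - 1 with hk_def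
    have hks : s ∈ Ideal.span {θ ^ k} := by
      by_contra h
      have := Nat.sInf_le (s := {t | s ∉ Ideal.span {θ ^ t}}) h
      omega
    obtain ⟨a, ha⟩ := Ideal.mem_span_singleton'.mp hks
    have haU : IsUnit a := by
      by_contra hna
      have hamem : a ∈ maximalIdeal S := hna
      rw [hθ, Submodule.mem_span_singleton] at hamem
      obtain ⟨a', rfl⟩ := hamem
      apply hk1
      have hkk : k1 = k + 1 := by omega
      rw [hkk]
      refine Ideal.mem_span_singleton'.mpr ⟨a', ?_⟩
      rw [← ha, pow_succ, smul_eq_mul]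
      ring
    obtain ⟨binv, hbinv⟩ := haU.exists_left_inv
    have hθk1 : θ ^ (k + 1) = 0 := by
      have h1 : a * θ ^ (k + 1) = 0 := by
        rw [pow_succ, ← mul_assoc, ha, mul_comm s θ, hs]
      calc θ ^ (k + 1) = (binv * a) * θ ^ (k + 1) := by rw [hbinv, one_mul]
        _ = binv * (a * θ ^ (k + 1)) := mul_assoc _ _ _
        _ = 0 := by rw [h1, mul_zero]
    have hek : e ≤ k + 1 := Nat.sInf_le hθk1
    refine ⟨a * θ ^ (k - (e - 1)), ?_⟩
    rw [hπ_def, mul_comm a, ← mul_assoc, ← pow_add]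
    have h2 : e - 1 + (k - (e - 1)) = k := by omega
    rw [h2, mul_comm _ a, ha]
  choose t ht using fun i => hfac (c i) (hann i)
  set ze : ↥C := ∑ i ∈ c.support, t i • b i with hze_def
  have hze2 : π • ze = xe := by
    rw [hze_def, Finset.smul_sum]
    have h1 : ∀ i ∈ c.support, π • (t i • b i) = c i • b i := by
      intro i _
      rw [smul_smul, ← ht i]
    rw [Finset.sum_congr rfl h1]
    conv_rhs => rw [← b.linearCombination_repr xe]
    rfl
  have hzC : (ze : Fin n → S) ∈ C := ze.2
  have hπz : (fun i => π * (ze : Fin n → S) i) = θ ^ j • x := by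
    have h1 : (π • ze : ↥C) = ⟨θ ^ j • x, hx'C⟩ := hze2
    have h2 := congrArg (fun (w : ↥C) => (w : Fin n → S)) h1
    exact h2
  have hΨz_ne : (fun i => residue S ((ze : Fin n → S) i)) ≠ 0 := by
    intro h
    apply hjx
    rw [← hπz]
    funext i
    exact hπm _ (Ideal.Quotient.eq_zero_iff_mem.mp (congrFun h i))
  have hΨzC : (fun i => residue S ((ze : Fin n → S) i)) ∈ Cres := by
    rw [hCres]
    exact Submodule.subset_span ⟨(ze : Fin n → S), hzC, rfl⟩
  have h2 : minrkdist (ResidueField R) Cres ≤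
      vecrank (ResidueField R) ((fun i => residue S ((ze : Fin n → S) i)) - 0) :=
    Nat.sInf_le ⟨_, hΨzC, 0, Cres.zero_mem, hΨz_ne, rfl⟩
  rw [sub_zero] at h2
  have keyz := key_vecrank (R := R) π hπ0 hπm (fun i => (ze : Fin n → S) i)
  have h3 : vecrank R (θ ^ j • x) ≤ vecrank R x := by
    have h4 := vecrank_map_le (LinearMap.mulLeft R (θ ^ j)) x
    have h5 : (fun i => (LinearMap.mulLeft R (θ ^ j)) (x i)) = θ ^ j • x := rfl
    rwa [h5] at h4
  calc minrkdist (ResidueField R) Cres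
      ≤ vecrank (ResidueField R) (fun i => residue S ((ze : Fin n → S) i)) := h2
    _ = vecrank R (fun i => π * (ze : Fin n → S) i) := keyz.symm
    _ = vecrank R (θ ^ j • x) := by rw [hπz]
    _ ≤ vecrank R x := h3
    _ = minrkdist R C := hvv
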